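/- Let (K, v) be a separably closed valued field of characteristic p > 0 with nontrivial value group Γ = v(K^×) ≠ {0}, and suppose K is imperfect (K^p ≠ K) with [K : K^p] finite. Then there do not exist a finite tuple (c_1, …, c_N) of elements of K that is a basis of K as a vector space over the subfield K^p, together with an element δ_0 ∈ Γ, such that for every a ∈ K, writing a = ∑_{i=1}^{N} a_i^p·c_i with a_i ∈ K, one has v(a) ≤ min_{1 ≤ i ≤ N} (p·v(a_i) + v(c_i) + δ_0) (where v(0) = ∞, so terms with a_i = 0 do not contribute to the minimum). -/

import Mathlib

/-- A valuation on a field `K` with values in the linearly ordered abelian group `Γ`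
(together with `∞ = ⊤`), surjective onto `Γ`, i.e. `Γ = v(K^×)`. -/
structure ValuedFieldAux (K : Type*) [Field K] (Γ : Type*)
    [AddCommGroup Γ] [LinearOrder Γ] [IsOrderedAddMonoid Γ] where
  v : K → WithTop Γ
  v_eq_top_iff : ∀ x : K, v x = ⊤ ↔ x = 0
  v_mul : ∀ x y : K, v (x * y) = v x + v y
  v_add : ∀ x y : K, min (v x) (v y) ≤ v (x + y)
  v_surj : ∀ γ : Γ, ∃ x : K, v x = (γ : WithTop Γ)


namespace ValuedFieldAux
variable {K : Type*} [Field K] {Γ : Type*} [AddCommGroup Γ] [LinearOrder Γ] [IsOrderedAddMonoid Γ]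
  (vf : ValuedFieldAux K Γ)

lemma v_ne_top {x : K} (hx : x ≠ 0) : vf.v x ≠ ⊤ := by
  simpa [vf.v_eq_top_iff] using hx

lemma exists_coe {x : K} (hx : x ≠ 0) : ∃ γ : Γ, vf.v x = (γ : WithTop Γ) := by
  rcases WithTop.ne_top_iff_exists.mp (vf.v_ne_top hx) with ⟨γ, hγ⟩
  exact ⟨γ, hγ.symm⟩

lemma v_one : vf.v 1 = 0 := by
  rcases vf.exists_coe (one_ne_zero (α := K)) with ⟨γ, hγ⟩
  have h := vf.v_mul 1 1
  rw [one_mul, hγ, ← WithTop.coe_add] at h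
  have h2 : γ = γ + γ := WithTop.coe_injective h
  have : γ = 0 := (left_eq_add.mp h2)

  simp [hγ, this]

lemma v_neg (x : K) : vf.v (-x) = vf.v x := by
  have hm : vf.v (-1 : K) = 0 := by
    rcases vf.exists_coe (neg_ne_zero.mpr (one_ne_zero (α := K))) with ⟨γ, hγ⟩
    have h := vf.v_mul (-1) (-1)
    rw [neg_mul_neg, one_mul, vf.v_one, hγ, ← WithTop.coe_add] at h
    have h2 : γ + γ = (0 : Γ) := by exact_mod_cast h.symm
    have : γ = 0 := by
      by_contra h0
      rcases (Ne.lt_or_gt h0) with hl | hl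
      · exact (add_neg hl hl).ne h2
      · exact (add_pos hl hl).ne' h2
    simp [hγ, this]
  calc vf.v (-x) = vf.v ((-1) * x) := by ring_nf
    _ = vf.v (-1) + vf.v x := vf.v_mul _ _
    _ = vf.v x := by rw [hm, zero_add]

lemma v_pow (x : K) (n : ℕ) : vf.v (x ^ n) = n • vf.v x := by
  induction n with
  | zero => simp [vf.v_one]
  | succ n ih => rw [pow_succ, vf.v_mul, ih, succ_nsmul]

lemma v_sub_ge (x y : K) : min (vf.v x) (vf.v y) ≤ vf.v (x - y) := by
  have := vf.v_add x (-y)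
  rwa [vf.v_neg y, ← sub_eq_add_neg] at this

/-- if `v (c - s) > v c` then `v s = v c`. -/
lemma v_eq_of_sub_lt {c s : K} (h : vf.v c < vf.v (c - s)) : vf.v s = vf.v c := by
  have h1 : vf.v c ≤ vf.v s := by
    have := vf.v_sub_ge c (c - s)
    have hcs : c - (c - s) = s := by ring
    rw [hcs] at this
    calc vf.v c = min (vf.v c) (vf.v (c - s)) := (min_eq_left h.le).symm
      _ ≤ vf.v s := this
  have h2 : vf.v s ≤ vf.v c := by
    by_contra hlt
    push_neg at hlt
    have hc : c = s + (c - s) := by ring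
    have := vf.v_add s (c - s)
    rw [← hc] at this
    have : vf.v c < vf.v c := lt_of_lt_of_le (lt_min hlt h) this
    exact lt_irrefl _ this
  exact le_antisymm h2 h1

end ValuedFieldAux

open Polynomial in
/-- In a separably closed valued field with nontrivial value group, `K^p` is dense. -/
lemma ValuedFieldAux.dense_pow {K : Type*} [Field K] {Γ : Type*}
    [AddCommGroup Γ] [LinearOrder Γ] [IsOrderedAddMonoid Γ] (vf : ValuedFieldAux K Γ)
    (p : ℕ) (hp : p.Prime) [CharP K p] [IsSepClosed K]
    (hΓ : ∃ γ : Γ, γ ≠ 0) (a : K) (γ : Γ) :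
    ∃ z : K, (γ : WithTop Γ) < vf.v (a - z ^ p) := by
  by_cases ha : a = 0
  · refine ⟨0, ?_⟩
    rw [ha, zero_pow hp.pos.ne', sub_zero, (vf.v_eq_top_iff 0).mpr rfl]
    exact WithTop.coe_lt_top γ
  obtain ⟨α, hα⟩ := vf.exists_coe ha
  obtain ⟨g, hg⟩ := hΓ
  have hgp : 0 < |g| := abs_pos.mpr hg
  set β : Γ := max (p • γ - α) ((p - 1) • γ) with hβ
  set s : Γ := max β |g| with hs
  have hp1 : p = (p - 1) + 1 := (Nat.succ_pred_eq_of_pos hp.pos).symm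
  have hps : p • s = (p - 1) • s + s := by
    nth_rewrite 1 [hp1]; rw [succ_nsmul]
  have hβs : β < p • s := by
    rcases le_or_gt β 0 with h0 | h0
    · have hs0 : 0 < s := lt_of_lt_of_le hgp (le_max_right _ _)
      calc β ≤ 0 := h0
        _ < s := hs0
        _ ≤ p • s := by rw [hps]; exact le_add_of_nonneg_left (nsmul_nonneg hs0.le _)
    · have hβles : β ≤ s := le_max_left _ _
      have hs0 : (0:Γ) ≤ s := le_trans h0.le hβles
      calc β < β + β := lt_add_of_pos_left β h0
        _ = 2 • β := (two_nsmul β).symm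
        _ ≤ 2 • s := nsmul_le_nsmul_right hβles 2
        _ ≤ p • s := nsmul_le_nsmul_left hs0 hp.two_le
  obtain ⟨cc, hcc⟩ := vf.v_surj s
  have hcc0 : cc ≠ 0 := by
    intro h
    rw [h, (vf.v_eq_top_iff 0).mpr rfl] at hcc
    exact (WithTop.top_ne_coe) hcc
  haveI : Fact p.Prime := ⟨hp⟩
  set f : K[X] := X ^ p - (C cc * X + C a) with hf
  have hdeg : f.degree = p := by
    rw [hf, degree_sub_eq_left_of_degree_lt, degree_X_pow]
    rw [degree_X_pow]
    calc (C cc * X + C a).degree ≤ 1 := degree_linear_le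
      _ < (p : WithBot ℕ) := by exact_mod_cast hp.one_lt
  have hder : derivative f = -(C cc) := by
    rw [hf]
    simp [derivative_X_pow, CharP.cast_eq_zero]
  have hsep : f.Separable := by
    rw [Polynomial.separable_def, hder]
    have hu : IsUnit (-(C cc)) := (Polynomial.isUnit_C.mpr (isUnit_iff_ne_zero.mpr hcc0)).neg
    obtain ⟨u, hu'⟩ := hu
    exact ⟨0, ↑u⁻¹, by rw [← hu']; simp⟩
  obtain ⟨y, hy⟩ := IsSepClosed.exists_root f (by rw [hdeg]; exact_mod_cast hp.ne_zero) hsep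
  have hyp : y ^ p = cc * y + a := by
    have h := hy
    rw [Polynomial.IsRoot, hf] at h
    simp only [eval_sub, eval_add, eval_mul, eval_pow, eval_C, eval_X] at h
    exact sub_eq_zero.mp h
  have hy0 : y ≠ 0 := by
    intro h
    rw [h, zero_pow hp.pos.ne', mul_zero, zero_add] at hyp
    exact ha hyp.symm
  obtain ⟨η, hη⟩ := vf.exists_coe hy0
  refine ⟨y, ?_⟩
  have key : a - y ^ p = -(cc * y) := by rw [hyp]; ring
  rw [key, vf.v_neg, vf.v_mul, hcc, hη, ← WithTop.coe_add, WithTop.coe_lt_coe]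
  -- goal : γ < s + η
  have hmin : min (s + η) α ≤ p • η := by
    have h1 := vf.v_add (cc * y) a
    rw [← hyp, vf.v_pow, vf.v_mul, hcc, hη, hα] at h1
    have h2 : ((min (s + η) α : Γ) : WithTop Γ) ≤ ((p • η : Γ) : WithTop Γ) := by
      rw [WithTop.coe_min]
      exact_mod_cast h1
    exact_mod_cast h2
  by_contra hcon
  push_neg at hcon
  rcases min_le_iff.mp hmin with h1 | h1
  · -- s + η ≤ p • η
    have h2 : s ≤ (p - 1) • η := by
      have : s + η ≤ (p - 1) • η + η := by
        rw [← succ_nsmul, ← hp1]; exact h1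
      exact le_of_add_le_add_right this
    have : p • s < p • s := by
      calc p • s = (p - 1) • s + s := hps
        _ ≤ (p - 1) • s + (p - 1) • η := add_le_add_right h2 _
        _ = (p - 1) • (s + η) := (nsmul_add s η (p - 1)).symm
        _ ≤ (p - 1) • γ := nsmul_le_nsmul_right hcon (p - 1)
        _ ≤ β := le_max_right _ _
        _ < p • s := hβs
    exact lt_irrefl _ this
  · -- α ≤ p • η
    have : p • γ < p • γ := by
      calc p • γ = (p • γ - α) + α := by abel
        _ ≤ β + α := add_le_add_left (le_max_left _ _) α
        _ < p • s + α := add_lt_add_left hβs α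
        _ ≤ p • s + p • η := add_le_add_right h1 _
        _ = p • (s + η) := (nsmul_add s η p).symm
        _ ≤ p • γ := nsmul_le_nsmul_right hcon p
    exact lt_irrefl _ this

/-- Let `(K, v)` be a separably closed valued field of characteristic
`p > 0` with nontrivial value group, `K` imperfect with `[K : K^p]` finite. Then there
is no finite tuple `(c_1, …, c_N)` which is a basis of `K` over `K^p` together with
`δ₀ ∈ Γ` such that for every `a = ∑ a_i^p·c_i` one has
`v a ≤ min_i (p·v(a_i) + v(c_i) + δ₀)` (a "weak σ-valuation basis"). -/
theorem stmt_9 (p : ℕ) (hp : p.Prime) (K : Type*) [Field K] [CharP K p] [IsSepClosed K]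
    (Γ : Type*) [AddCommGroup Γ] [LinearOrder Γ] [IsOrderedAddMonoid Γ] (vf : ValuedFieldAux K Γ)
    (hΓ : ∃ γ : Γ, γ ≠ 0)
    (himp : ∃ x : K, ∀ y : K, y ^ p ≠ x)
    (hfin : ∃ (N : ℕ) (c : Fin N → K), ∀ a : K, ∃ w : Fin N → K,
      a = ∑ i, (w i) ^ p * c i) :
    ¬ ∃ (N : ℕ) (c : Fin N → K) (δ₀ : Γ),
        (∀ a : K, ∃! w : Fin N → K, a = ∑ i, (w i) ^ p * c i) ∧
        (∀ (a : K) (w : Fin N → K), a = ∑ i, (w i) ^ p * c i →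
          vf.v a ≤ Finset.univ.inf
            (fun i => p • vf.v (w i) + vf.v (c i) + (δ₀ : WithTop Γ))) := by

  rintro ⟨N, c, δ₀, hex, hval⟩
  haveI : Fact p.Prime := ⟨hp⟩
  -- all `c i` are nonzero, by uniqueness of representations of `0`
  have hc0 : ∀ i, c i ≠ 0 := by
    intro i hci
    obtain ⟨w0, hw0, huniq⟩ := hex 0
    set d : Fin N → K := fun t => if t = i then 1 else 0 with hd
    have hsum : ∑ j, d j ^ p * c j = c i := by
      rw [Finset.sum_eq_single i]
      · simp [hd]
      · intro b _ hb
        simp only [hd, if_neg hb]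
        rw [zero_pow hp.pos.ne', zero_mul]
      · intro h; exact absurd (Finset.mem_univ i) h
    have h1 : (fun _ : Fin N => (0:K)) = w0 :=
      huniq _ (by simp [zero_pow hp.pos.ne'])
    have h2 : d = w0 := huniq _ (by show (0:K) = ∑ t, d t ^ p * c t; rw [hsum, hci])
    have h3 : d i = 0 := by rw [h2, ← h1]
    simp [hd] at h3
  obtain ⟨e, he, -⟩ := hex 1
  obtain ⟨x, hx⟩ := himp
  -- N ≥ 2
  have hN2 : 2 ≤ N := by
    by_contra hlt
    push_neg at hlt
    have h01 : N = 0 ∨ N = 1 := by omega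
    rcases h01 with h | h
    · subst h; simp at he
    · subst h
      obtain ⟨w, hw, -⟩ := hex x
      have he' : (1:K) = e 0 ^ p * c 0 := by simpa using he
      have hw' : x = w 0 ^ p * c 0 := by simpa using hw
      have he0 : e 0 ≠ 0 := by
        intro h; rw [h, zero_pow hp.pos.ne', zero_mul] at he'; exact one_ne_zero he'
      apply hx (w 0 * (e 0)⁻¹)
      have hc00 : c 0 = ((e 0)⁻¹) ^ p := by
        rw [inv_pow]
        exact eq_inv_of_mul_eq_one_right he'.symm
      rw [mul_pow, ← hc00, ← hw']
  -- an index with nonzero coordinate of 1, and another index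
  have hex1 : ∃ i, e i ≠ 0 := by
    by_contra hno; push_neg at hno
    have : (1:K) = 0 := by
      rw [he]
      exact Finset.sum_eq_zero fun i _ => by rw [hno i, zero_pow hp.pos.ne', zero_mul]
    exact one_ne_zero this
  obtain ⟨i₁, hi₁⟩ := hex1
  haveI : Nontrivial (Fin N) := Fin.nontrivial_iff_two_le.mpr hN2
  obtain ⟨j, hj⟩ := exists_ne i₁
  obtain ⟨αj, hαj⟩ := vf.exists_coe (hc0 j)
  obtain ⟨α₀, hα₀⟩ := vf.exists_coe (hc0 i₁)
  obtain ⟨ε, hε⟩ := vf.exists_coe hi₁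
  set T : Γ := αj + p • ε + α₀ + δ₀ with hT
  obtain ⟨z, hz⟩ := vf.dense_pow p hp hΓ (c j) (max αj T)
  have hvcj : vf.v (c j) < vf.v (c j - z ^ p) := by
    refine lt_of_le_of_lt ?_ hz
    rw [hαj]
    exact_mod_cast le_max_left αj T
  have hvz : vf.v (z ^ p) = vf.v (c j) := vf.v_eq_of_sub_lt hvcj
  set w : Fin N → K := fun i => (if i = j then 1 else 0) - z * e i with hw
  have hrep : c j - z ^ p = ∑ i, w i ^ p * c i := by
    have h1 : ∀ i, w i ^ p * c i
        = (if i = j then c i else 0) - z ^ p * (e i ^ p * c i) := by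
      intro i
      show ((if i = j then (1:K) else 0) - z * e i) ^ p * c i = _
      rw [sub_pow_char, mul_pow]
      rcases eq_or_ne i j with h | h
      · simp only [if_pos h, one_pow]; ring
      · simp only [if_neg h, zero_pow hp.pos.ne']; ring
    calc c j - z ^ p
        = (∑ i, if i = j then c i else 0) - z ^ p * ∑ i, e i ^ p * c i := by
          rw [Finset.sum_ite_eq' Finset.univ j c, if_pos (Finset.mem_univ j), ← he, mul_one]
      _ = ∑ i, ((if i = j then c i else 0) - z ^ p * (e i ^ p * c i)) := by
          rw [Finset.sum_sub_distrib, ← Finset.mul_sum]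
      _ = ∑ i, w i ^ p * c i := Finset.sum_congr rfl fun i _ => (h1 i).symm
  have hle := hval _ w hrep
  have hterm : Finset.univ.inf (fun i => p • vf.v (w i) + vf.v (c i) + (δ₀ : WithTop Γ))
      ≤ p • vf.v (w i₁) + vf.v (c i₁) + (δ₀ : WithTop Γ) :=
    Finset.inf_le (Finset.mem_univ i₁)
  have hwi : w i₁ = -(z * e i₁) := by
    show (if i₁ = j then (1:K) else 0) - z * e i₁ = _
    rw [if_neg hj.symm, zero_sub]
  have hz0 : z ≠ 0 := by
    intro h
    rw [h, zero_pow hp.pos.ne', (vf.v_eq_top_iff 0).mpr rfl] at hvz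
    exact vf.v_ne_top (hc0 j) hvz.symm
  obtain ⟨ζ, hζ⟩ := vf.exists_coe hz0
  have hpζ : p • ζ = αj := by
    have h4 := (vf.v_pow z p).symm.trans (hvz.trans hαj)
    rw [hζ] at h4
    have h5 : ((p • ζ : Γ) : WithTop Γ) = (αj : WithTop Γ) := h4
    exact_mod_cast h5
  have hvwi : p • vf.v (w i₁) + vf.v (c i₁) + (δ₀ : WithTop Γ) = ((T : Γ) : WithTop Γ) := by
    rw [hwi, vf.v_neg, vf.v_mul, hζ, hε, hα₀, ← WithTop.coe_add]
    have h6 : (p • ((ζ + ε : Γ) : WithTop Γ)) = ((p • (ζ + ε) : Γ) : WithTop Γ) := rfl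
    rw [h6, ← WithTop.coe_add, ← WithTop.coe_add]
    have h7 : p • (ζ + ε) + α₀ + δ₀ = T := by
      rw [nsmul_add, hpζ, hT]
    exact_mod_cast congrArg (fun t : Γ => ((t : WithTop Γ))) h7
  have hfinal : vf.v (c j - z ^ p) ≤ ((T : Γ) : WithTop Γ) :=
    le_trans hle (le_trans hterm (le_of_eq hvwi))
  have hTlt : ((T : Γ) : WithTop Γ) < vf.v (c j - z ^ p) :=
    lt_of_le_of_lt (by exact_mod_cast le_max_right αj T) hz
  exact absurd hfinal (not_le.mpr hTlt)
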